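/- Let g, h ∈ C¹([a,T]) with 0 < α < 1. Then ∫_a^T [ g(t)·D_t^α h(t) + h(t)·D_t^α g(t) ] dt · Γ(1−α) = ∫_a^T g(t)h(t)·[ (T−t)^{−α} + (t−a)^{−α} ] dt + α ∫_a^T ∫_a^t [g(t)−g(s)][h(t)−h(s)] (t−s)^{−1−α} ds dt − ∫_a^T [ g(t)h(a) + h(t)g(a) ] (t−a)^{−α} dt, where D_t^α denotes the Caputo derivative D_t^α u(t) = (1/Γ(1−α)) ∫_a^t u'(s)(t−s)^{−α} ds. -/

import Mathlib

open MeasureTheory intervalIntegral Set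

lemma ker_int {α : ℝ} (hα1 : α < 1) (t c : ℝ) :
    IntervalIntegrable (fun s => (t - s) ^ (-α)) volume c t := by
  have h : (-1:ℝ) < -α := by linarith
  simpa using (intervalIntegral.intervalIntegrable_rpow' (a := t - c) (b := 0) h).comp_sub_left t

lemma ker_int' {α : ℝ} (hα1 : α < 1) (a T : ℝ) :
    IntervalIntegrable (fun t => (t - a) ^ (-α)) volume a T := by
  have h : (-1:ℝ) < -α := by linarith
  simpa using (intervalIntegral.intervalIntegrable_rpow' (a := 0) (b := T - a) h).comp_sub_right a

lemma ker_integral {α : ℝ} (hα1 : α < 1) {c t : ℝ} :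
    ∫ s in c..t, (t - s) ^ (-α) = (t - c) ^ (1 - α) / (1 - α) := by
  rw [show (fun s => (t - s) ^ (-α)) = fun s => ((fun u : ℝ => u ^ (-α)) (t - s)) from rfl,
    intervalIntegral.integral_comp_sub_left (fun u : ℝ => u ^ (-α)) t]
  rw [integral_rpow (Or.inl (by linarith))]
  rw [sub_self, Real.zero_rpow (by linarith), show -α + 1 = 1 - α by ring]
  ring

lemma ker_integral' {α : ℝ} (hα1 : α < 1) {s T : ℝ} :
    ∫ t in s..T, (t - s) ^ (-α) = (T - s) ^ (1 - α) / (1 - α) := by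
  rw [show (fun t => (t - s) ^ (-α)) = fun t => ((fun u : ℝ => u ^ (-α)) (t - s)) from rfl,
    intervalIntegral.integral_comp_sub_right (fun u : ℝ => u ^ (-α)) s]
  rw [integral_rpow (Or.inl (by linarith))]
  rw [sub_self, Real.zero_rpow (by linarith), show -α + 1 = 1 - α by ring]
  ring

lemma lip_aux {g : ℝ → ℝ} (hg : ContDiff ℝ 1 g) (a T : ℝ) :
    ∃ C : ℝ, 0 ≤ C ∧ (∀ x ∈ Icc a T, |deriv g x| ≤ C) ∧
      ∀ x ∈ Icc a T, ∀ y ∈ Icc a T, |g y - g x| ≤ C * |y - x| := by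
  obtain ⟨C, hC⟩ := (isCompact_Icc (a := a) (b := T)).exists_bound_of_continuousOn
    ((hg.continuous_deriv le_rfl).continuousOn)
  refine ⟨max C 0, le_max_right _ _, fun x hx => (hC x hx).trans (le_max_left _ _), ?_⟩
  intro x hx y hy
  exact Convex.norm_image_sub_le_of_norm_deriv_le
    (fun z _ => (hg.differentiable one_ne_zero).differentiableAt)
    (fun z hz => (hC z hz).trans (le_max_left _ _)) (convex_Icc a T) hx hy

lemma tendsto_bound_rpow {β C a t : ℝ} (hβ : 0 < β) {f : ℝ → ℝ}
    (hb : ∀ s ∈ Icc a t, |f s| ≤ C * (t - s) ^ β) :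
    Filter.Tendsto f (nhdsWithin t (Icc a t)) (nhds 0) := by
  have h2 : ContinuousAt (fun s => C * (t - s) ^ β) t := by
    have hc : ContinuousAt (fun s : ℝ => t - s) t := (continuous_const.sub continuous_id).continuousAt
    have hr : ContinuousAt (fun u : ℝ => u ^ β) (t - t) := by
      rw [sub_self]; exact Real.continuousAt_rpow_const 0 β (Or.inr hβ.le)
    exact (hr.comp hc).const_mul C
  have h1 : Filter.Tendsto (fun s => C * (t - s) ^ β) (nhdsWithin t (Icc a t)) (nhds 0) := by
    have := (h2.continuousWithinAt (s := Icc a t)).tendsto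
    simpa [Real.zero_rpow hβ.ne'] using this
  refine squeeze_zero_norm' ?_ h1
  filter_upwards [self_mem_nhdsWithin] with s hs using hb s hs

lemma rpow_collapse {x γ : ℝ} (hx : 0 ≤ x) (hγ0 : γ < 0) (h2 : 0 < 2 + γ) :
    x * x * x ^ γ = x ^ (2 + γ) := by
  rcases eq_or_lt_of_le hx with h | h
  · rw [← h, Real.zero_rpow (ne_of_gt h2), Real.zero_rpow (ne_of_lt hγ0)]; ring
  · rw [Real.rpow_add h, show x ^ (2:ℝ) = x * x by
      rw [show (2:ℝ) = ((2:ℕ):ℝ) by norm_num, Real.rpow_natCast]; ring]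

lemma phi_abs_le {g h : ℝ → ℝ} {Cg Ch : ℝ} {a T γ : ℝ} (hγ0 : γ < 0) (h2 : 0 < 2 + γ)
    (hCg : 0 ≤ Cg) (hCh : 0 ≤ Ch)
    (hLg : ∀ x ∈ Icc a T, ∀ y ∈ Icc a T, |g y - g x| ≤ Cg * |y - x|)
    (hLh : ∀ x ∈ Icc a T, ∀ y ∈ Icc a T, |h y - h x| ≤ Ch * |y - x|)
    {s t : ℝ} (hs : s ∈ Icc a T) (ht : t ∈ Icc a T) (hst : s ≤ t) :
    |(g t - g s) * (h t - h s) * (t - s) ^ γ| ≤ (Cg * Ch) * (t - s) ^ (2 + γ) := by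
  have hts : (0:ℝ) ≤ t - s := by linarith
  have hk : |(t - s) ^ γ| = (t - s) ^ γ := abs_of_nonneg (Real.rpow_nonneg hts γ)
  have h1 : |g t - g s| ≤ Cg * (t - s) := by
    have := hLg s hs t ht; rwa [abs_of_nonneg hts] at this
  have h2' : |h t - h s| ≤ Ch * (t - s) := by
    have := hLh s hs t ht; rwa [abs_of_nonneg hts] at this
  calc |(g t - g s) * (h t - h s) * (t - s) ^ γ|
      = |g t - g s| * |h t - h s| * (t - s) ^ γ := by rw [abs_mul, abs_mul, hk]
    _ ≤ (Cg * (t - s)) * (Ch * (t - s)) * (t - s) ^ γ := by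
        apply mul_le_mul_of_nonneg_right _ (Real.rpow_nonneg hts γ)
        exact mul_le_mul h1 h2' (abs_nonneg _) (by positivity)
    _ = (Cg * Ch) * ((t - s) * (t - s) * (t - s) ^ γ) := by ring
    _ = (Cg * Ch) * (t - s) ^ (2 + γ) := by rw [rpow_collapse hts hγ0 h2]

lemma phi_cont {γ : ℝ} (hγ0 : γ < 0) (h2 : 0 < 2 + γ) {g h : ℝ → ℝ}
    (hg : ContDiff ℝ 1 g) (hh : ContDiff ℝ 1 h) {a t : ℝ} (hat : a ≤ t) :
    ContinuousOn (fun s => (g t - g s) * (h t - h s) * (t - s) ^ γ) (Icc a t) := by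
  obtain ⟨Cg, hCg0, _, hLg⟩ := lip_aux hg a t
  obtain ⟨Ch, hCh0, _, hLh⟩ := lip_aux hh a t
  intro s hs
  rcases lt_or_eq_of_le hs.2 with hst | hst
  · apply ContinuousAt.continuousWithinAt
    have hne : t - s ≠ 0 := sub_ne_zero.mpr (ne_of_gt hst)
    have hk : ContinuousAt (fun s : ℝ => (t - s) ^ γ) s := by
      have h1 : ContinuousAt (fun u : ℝ => u ^ γ) (t - s) :=
        Real.continuousAt_rpow_const _ _ (Or.inl hne)
      exact h1.comp ((continuous_const.sub continuous_id).continuousAt)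
    exact (((continuous_const.sub hg.continuous).continuousAt.mul
      (continuous_const.sub hh.continuous).continuousAt).mul hk)
  · subst hst
    have key : Filter.Tendsto (fun s' => (g s - g s') * (h s - h s') * (s - s') ^ γ)
        (nhdsWithin s (Icc a s)) (nhds 0) :=
      tendsto_bound_rpow h2 (fun x hx =>
        phi_abs_le hγ0 h2 hCg0 hCh0 hLg hLh hx ⟨hat, le_rfl⟩ hx.2)
    have h0 : (g s - g s) * (h s - h s) * (s - s) ^ γ = 0 := by
      rw [sub_self, zero_mul, zero_mul]
    show Filter.Tendsto (fun s' => (g s - g s') * (h s - h s') * (s - s') ^ γ)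
        (nhdsWithin s (Icc a s)) (nhds ((g s - g s) * (h s - h s) * (s - s) ^ γ))
    rw [h0]
    exact key

lemma phi_intble {γ : ℝ} (hγ0 : γ < 0) (h2 : 0 < 2 + γ) {g h : ℝ → ℝ}
    (hg : ContDiff ℝ 1 g) (hh : ContDiff ℝ 1 h) {a t : ℝ} (hat : a ≤ t) :
    IntervalIntegrable (fun s => (g t - g s) * (h t - h s) * (t - s) ^ γ) volume a t := by
  apply ContinuousOn.intervalIntegrable
  rw [uIcc_of_le hat]
  exact phi_cont hγ0 h2 hg hh hat
lemma key_t {α a : ℝ} (hα0 : 0 < α) (hα1 : α < 1) {g h : ℝ → ℝ}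
    (hg : ContDiff ℝ 1 g) (hh : ContDiff ℝ 1 h) {t : ℝ} (hat : a < t) :
    (∫ s in a..t, (g t * (deriv h s * (t - s) ^ (-α)) + h t * (deriv g s * (t - s) ^ (-α))))
      = (∫ s in a..t, (deriv g s * h s + g s * deriv h s) * (t - s) ^ (-α))
        + α * (∫ s in a..t, (g t - g s) * (h t - h s) * (t - s) ^ (-1 - α))
        + (g t - g a) * (h t - h a) * (t - a) ^ (-α) := by
  have hg' : Continuous (deriv g) := hg.continuous_deriv le_rfl
  have hh' : Continuous (deriv h) := hh.continuous_deriv le_rfl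
  set F : ℝ → ℝ := fun s => (g t - g s) * (h t - h s) * (t - s) ^ (-α) with hF
  set f' : ℝ → ℝ := fun s =>
    ((0 - deriv g s) * (h t - h s) + (g t - g s) * (0 - deriv h s)) * (t - s) ^ (-α)
      + α * ((g t - g s) * (h t - h s) * (t - s) ^ (-1 - α)) with hf'
  have h1 : IntervalIntegrable (fun s => (deriv g s * h s + g s * deriv h s) * (t - s) ^ (-α))
      volume a t :=
    (ker_int hα1 t a).continuousOn_mul
      (((hg'.mul hh.continuous).add (hg.continuous.mul hh')).continuousOn)
  have h2 : IntervalIntegrable (fun s => (g t - g s) * (h t - h s) * (t - s) ^ (-1 - α))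
      volume a t :=
    phi_intble (by linarith) (by linarith) hg hh hat.le
  have h3 : IntervalIntegrable f' volume a t := by
    apply IntervalIntegrable.add
    · exact (ker_int hα1 t a).continuousOn_mul
        ((((continuous_const.sub hg').mul (continuous_const.sub hh.continuous)).add
          ((continuous_const.sub hg.continuous).mul (continuous_const.sub hh'))).continuousOn)
    · exact h2.const_mul α
  have hFTC : ∫ s in a..t, f' s = F t - F a := by
    apply intervalIntegral.integral_eq_sub_of_hasDeriv_right_of_le hat.le
    · exact phi_cont (by linarith) (by linarith) hg hh hat.le
    · intro x hx
      have hgd : HasDerivAt g (deriv g x) x := ((hg.differentiable one_ne_zero) x).hasDerivAt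
      have hhd : HasDerivAt h (deriv h x) x := ((hh.differentiable one_ne_zero) x).hasDerivAt
      have hphi : HasDerivAt (fun s => (g t - g s) * (h t - h s))
          ((0 - deriv g x) * (h t - h x) + (g t - g x) * (0 - deriv h x)) x :=
        ((hasDerivAt_const x (g t)).sub hgd).mul ((hasDerivAt_const x (h t)).sub hhd)
      have hu : HasDerivAt (fun s : ℝ => t - s) (0 - 1) x :=
        (hasDerivAt_const x t).sub (hasDerivAt_id x)
      have hne : t - x ≠ 0 := sub_ne_zero.mpr (ne_of_gt hx.2)
      have hv : HasDerivAt (fun u : ℝ => u ^ (-α)) (-α * (t - x) ^ (-α - 1)) (t - x) :=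
        Real.hasDerivAt_rpow_const (Or.inl hne)
      have hk : HasDerivAt (fun s : ℝ => (t - s) ^ (-α)) (-α * (t - x) ^ (-α - 1) * (0 - 1)) x := by
        simpa [Function.comp_def] using hv.comp x hu
      have hprod := hphi.mul hk
      rw [hf']
      show HasDerivWithinAt F
        (((0 - deriv g x) * (h t - h x) + (g t - g x) * (0 - deriv h x)) * (t - x) ^ (-α)
          + α * ((g t - g x) * (h t - h x) * (t - x) ^ (-1 - α))) (Set.Ioi x) x
      rw [show (-1 : ℝ) - α = -α - 1 by ring]
      have heq : ((0 - deriv g x) * (h t - h x) + (g t - g x) * (0 - deriv h x)) * (t - x) ^ (-α)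
          + α * ((g t - g x) * (h t - h x) * (t - x) ^ (-α - 1))
          = ((0 - deriv g x) * (h t - h x) + (g t - g x) * (0 - deriv h x)) * (t - x) ^ (-α)
            + ((g t - g x) * (h t - h x)) * (-α * (t - x) ^ (-α - 1) * (0 - 1)) := by ring
      rw [heq]
      exact hprod.hasDerivWithinAt
    · exact h3
  have hFt : F t = 0 := by rw [hF]; simp
  have hFa : F a = (g t - g a) * (h t - h a) * (t - a) ^ (-α) := rfl
  have hsplit : (∫ s in a..t,
        (g t * (deriv h s * (t - s) ^ (-α)) + h t * (deriv g s * (t - s) ^ (-α))))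
      = ∫ s in a..t, (((deriv g s * h s + g s * deriv h s) * (t - s) ^ (-α)
          + α * ((g t - g s) * (h t - h s) * (t - s) ^ (-1 - α))) - f' s) := by
    apply intervalIntegral.integral_congr
    intro s _
    rw [hf']
    ring
  rw [hsplit, intervalIntegral.integral_sub (h1.add (h2.const_mul α)) h3,
    intervalIntegral.integral_add h1 (h2.const_mul α), intervalIntegral.integral_const_mul,
    hFTC, hFt, hFa]
  ring
lemma meas_ker {r : ℝ} : Measurable fun q : ℝ × ℝ => (q.1 - q.2) ^ r := by
  have h1 : Measurable fun x : ℝ => x ^ r := by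
    apply measurable_of_continuousOn_compl_singleton 0
    intro x hx
    exact (Real.continuousAt_rpow_const x _ (Or.inl hx)).continuousWithinAt
  exact h1.comp (measurable_fst.sub measurable_snd)

lemma tri_repr {a T t : ℝ} (hat : a < t) (htT : t ≤ T) (W : ℝ → ℝ) :
    (∫ s in Set.Ioc a T, (if s < t then W s else 0)) = ∫ s in a..t, W s := by
  have h1 : (fun s => if s < t then W s else 0) = (Set.Iio t).indicator W := by
    funext s; simp [Set.indicator_apply, Set.mem_Iio]
  rw [h1, MeasureTheory.integral_indicator measurableSet_Iio,
    Measure.restrict_restrict measurableSet_Iio]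
  have h2 : Set.Iio t ∩ Set.Ioc a T = Set.Ioo a t := by
    ext x
    simp only [Set.mem_inter_iff, Set.mem_Iio, Set.mem_Ioc, Set.mem_Ioo]
    constructor
    · rintro ⟨h3, h4, h5⟩; exact ⟨h4, h3⟩
    · rintro ⟨h3, h4⟩; exact ⟨h4, h3, by linarith⟩
  rw [h2, ← MeasureTheory.integral_Ioc_eq_integral_Ioo, intervalIntegral.integral_of_le hat.le]

lemma tri_repr' {α a T s : ℝ} (hα1 : α < 1) (has : a < s) (hsT : s ≤ T) (c : ℝ) :
    (∫ t in Set.Ioc a T, (if s < t then c * (t - s) ^ (-α) else 0))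
      = c * ((T - s) ^ (1 - α) / (1 - α)) := by
  have h1 : (fun t => if s < t then c * (t - s) ^ (-α) else 0)
      = (Set.Ioi s).indicator (fun t => c * (t - s) ^ (-α)) := by
    funext t; simp [Set.indicator_apply, Set.mem_Ioi]
  rw [h1, MeasureTheory.integral_indicator measurableSet_Ioi,
    Measure.restrict_restrict measurableSet_Ioi]
  have h2 : Set.Ioi s ∩ Set.Ioc a T = Set.Ioc s T := by
    ext x
    simp only [Set.mem_inter_iff, Set.mem_Ioi, Set.mem_Ioc]
    constructor
    · rintro ⟨h3, _, h5⟩; exact ⟨h3, h5⟩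
    · rintro ⟨h3, h4⟩; exact ⟨h3, by linarith, h4⟩
  rw [h2, ← intervalIntegral.integral_of_le hsT, intervalIntegral.integral_const_mul,
    ker_integral' hα1]

lemma finite_restrict {a T : ℝ} : IsFiniteMeasure (volume.restrict (Set.Ioc a T)) := by
  constructor
  rw [Measure.restrict_apply_univ]
  exact measure_Ioc_lt_top

set_option maxHeartbeats 2000000 in
lemma K_prod_integrable {α a T : ℝ} (hα0 : 0 < α) (hα1 : α < 1) (haT : a < T)
    {g h : ℝ → ℝ} (hg : ContDiff ℝ 1 g) (hh : ContDiff ℝ 1 h) :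
    Integrable (fun q : ℝ × ℝ =>
        if q.2 < q.1 then (g q.1 - g q.2) * (h q.1 - h q.2) * (q.1 - q.2) ^ (-1 - α) else 0)
      ((volume.restrict (Set.Ioc a T)).prod (volume.restrict (Set.Ioc a T))) := by
  obtain ⟨Cg, hCg0, _, hLg⟩ := lip_aux hg a T
  obtain ⟨Ch, hCh0, _, hLh⟩ := lip_aux hh a T
  have hmeas : Measurable (fun q : ℝ × ℝ =>
      if q.2 < q.1 then (g q.1 - g q.2) * (h q.1 - h q.2) * (q.1 - q.2) ^ (-1 - α) else 0) := by
    apply Measurable.ite (measurableSet_lt measurable_snd measurable_fst)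
    · exact (((hg.continuous.measurable.comp measurable_fst).sub
        (hg.continuous.measurable.comp measurable_snd)).mul
        ((hh.continuous.measurable.comp measurable_fst).sub
        (hh.continuous.measurable.comp measurable_snd))).mul (meas_ker (r := -1 - α))
    · exact measurable_const
  haveI : IsFiniteMeasure (volume.restrict (Set.Ioc a T)) := finite_restrict
  haveI : IsFiniteMeasure ((volume.restrict (Set.Ioc a T)).prod (volume.restrict (Set.Ioc a T))) :=
    MeasureTheory.Measure.prod.instIsFiniteMeasure _ _
  apply MeasureTheory.Integrable.mono'
    (g := fun _ => Cg * Ch * (T - a) ^ (1 - α)) (integrable_const _)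
    hmeas.aestronglyMeasurable
  rw [Measure.prod_restrict]
  filter_upwards [MeasureTheory.ae_restrict_mem (measurableSet_Ioc.prod measurableSet_Ioc)]
    with q hq
  obtain ⟨hq1, hq2⟩ := hq
  by_cases hlt : q.2 < q.1
  · rw [if_pos hlt]
    have hb := phi_abs_le (g := g) (h := h) (γ := -1 - α) (by linarith) (by linarith)
      hCg0 hCh0 hLg hLh (Set.mem_Icc.mpr ⟨hq2.1.le, hq2.2⟩)
      (Set.mem_Icc.mpr ⟨hq1.1.le, hq1.2⟩) hlt.le
    rw [show (2:ℝ) + (-1 - α) = 1 - α by ring] at hb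
    rw [Real.norm_eq_abs]
    refine hb.trans ?_
    have h1 : (q.1 - q.2) ^ (1 - α) ≤ (T - a) ^ (1 - α) :=
      Real.rpow_le_rpow (by linarith [hq2.1, hq1.2, hlt]) (by linarith [hq2.1, hq1.2])
        (by linarith)
    exact mul_le_mul_of_nonneg_left h1 (by positivity)
  · rw [if_neg hlt]
    simp only [norm_zero]
    exact mul_nonneg (mul_nonneg hCg0 hCh0) (Real.rpow_nonneg (by linarith) _)

set_option maxHeartbeats 2000000 in
lemma P_prod_integrable {α a T : ℝ} (hα0 : 0 < α) (hα1 : α < 1) (haT : a < T)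
    {f : ℝ → ℝ} (hf : Continuous f) :
    Integrable (Function.uncurry fun t s : ℝ => if s < t then f s * (t - s) ^ (-α) else 0)
      ((volume.restrict (Set.Ioc a T)).prod (volume.restrict (Set.Ioc a T))) := by
  obtain ⟨Cf, hCf⟩ := (isCompact_Icc (a := a) (b := T)).exists_bound_of_continuousOn
    hf.continuousOn
  have hCf0 : 0 ≤ Cf := le_trans (norm_nonneg _) (hCf a ⟨le_rfl, haT.le⟩)
  haveI : IsFiniteMeasure (volume.restrict (Set.Ioc a T)) := finite_restrict
  have hmeas : Measurable (fun q : ℝ × ℝ =>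
      if q.2 < q.1 then f q.2 * (q.1 - q.2) ^ (-α) else 0) :=
    Measurable.ite (measurableSet_lt measurable_snd measurable_fst)
      ((hf.measurable.comp measurable_snd).mul (meas_ker (r := -α))) measurable_const
  have hdom : ∀ t ∈ Set.Ioc a T, Integrable
      (fun s => if s < t then Cf * (t - s) ^ (-α) else 0) (volume.restrict (Set.Ioc a T)) := by
    intro t ht
    have h1 : (fun s => if s < t then Cf * (t - s) ^ (-α) else 0)
        = (Set.Iio t).indicator (fun s => Cf * (t - s) ^ (-α)) := by
      funext s; simp [Set.indicator_apply, Set.mem_Iio]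
    rw [h1, MeasureTheory.integrable_indicator_iff measurableSet_Iio, MeasureTheory.IntegrableOn,
      Measure.restrict_restrict measurableSet_Iio]
    have h2 : Set.Iio t ∩ Set.Ioc a T = Set.Ioo a t := by
      ext x
      simp only [Set.mem_inter_iff, Set.mem_Iio, Set.mem_Ioc, Set.mem_Ioo]
      exact ⟨fun ⟨h3, h4, _⟩ => ⟨h4, h3⟩, fun ⟨h3, h4⟩ => ⟨h4, h3, by linarith [ht.2]⟩⟩
    rw [h2]
    have hi : IntervalIntegrable (fun s => Cf * (t - s) ^ (-α)) volume a t :=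
      (ker_int hα1 t a).const_mul Cf
    rw [intervalIntegrable_iff_integrableOn_Ioc_of_le ht.1.le] at hi
    exact hi.mono_set Set.Ioo_subset_Ioc_self
  have hint : ∀ t ∈ Set.Ioc a T, Integrable
      (fun s => if s < t then f s * (t - s) ^ (-α) else 0) (volume.restrict (Set.Ioc a T)) := by
    intro t ht
    have h1 : (fun s => if s < t then f s * (t - s) ^ (-α) else 0)
        = (Set.Iio t).indicator (fun s => f s * (t - s) ^ (-α)) := by
      funext s; simp [Set.indicator_apply, Set.mem_Iio]
    rw [h1, MeasureTheory.integrable_indicator_iff measurableSet_Iio, MeasureTheory.IntegrableOn,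
      Measure.restrict_restrict measurableSet_Iio]
    have h2 : Set.Iio t ∩ Set.Ioc a T = Set.Ioo a t := by
      ext x
      simp only [Set.mem_inter_iff, Set.mem_Iio, Set.mem_Ioc, Set.mem_Ioo]
      exact ⟨fun ⟨h3, h4, _⟩ => ⟨h4, h3⟩, fun ⟨h3, h4⟩ => ⟨h4, h3, by linarith [ht.2]⟩⟩
    rw [h2]
    have hi : IntervalIntegrable (fun s => f s * (t - s) ^ (-α)) volume a t :=
      (ker_int hα1 t a).continuousOn_mul hf.continuousOn
    rw [intervalIntegrable_iff_integrableOn_Ioc_of_le ht.1.le] at hi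
    exact hi.mono_set Set.Ioo_subset_Ioc_self
  have hmeas' : AEStronglyMeasurable
      (Function.uncurry fun t s : ℝ => if s < t then f s * (t - s) ^ (-α) else 0)
      ((volume.restrict (Set.Ioc a T)).prod (volume.restrict (Set.Ioc a T))) :=
    hmeas.aestronglyMeasurable
  rw [MeasureTheory.integrable_prod_iff hmeas']
  constructor
  · filter_upwards [MeasureTheory.ae_restrict_mem measurableSet_Ioc] with t ht
    exact hint t ht
  · apply MeasureTheory.Integrable.mono'
      (g := fun _ => Cf * ((T - a) ^ (1 - α) / (1 - α))) (integrable_const _)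
    · exact hmeas.aestronglyMeasurable.norm.integral_prod_right'
    · filter_upwards [MeasureTheory.ae_restrict_mem measurableSet_Ioc] with t ht
      have hb1 : (∫ s in Set.Ioc a T, ‖if s < t then f s * (t - s) ^ (-α) else 0‖)
          ≤ ∫ s in Set.Ioc a T, (if s < t then Cf * (t - s) ^ (-α) else 0) := by
        apply MeasureTheory.integral_mono_ae ((hint t ht).norm) (hdom t ht)
        filter_upwards [MeasureTheory.ae_restrict_mem measurableSet_Ioc] with s hs
        by_cases hlt : s < t
        · rw [if_pos hlt, if_pos hlt, Real.norm_eq_abs, abs_mul,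
            abs_of_nonneg (Real.rpow_nonneg (by linarith) _)]
          exact mul_le_mul_of_nonneg_right (hCf s ⟨hs.1.le, hs.2⟩)
            (Real.rpow_nonneg (by linarith) _)
        · rw [if_neg hlt, if_neg hlt, norm_zero]
      have hb2 : (∫ s in Set.Ioc a T, (if s < t then Cf * (t - s) ^ (-α) else 0))
          = Cf * ((t - a) ^ (1 - α) / (1 - α)) := by
        rw [tri_repr ht.1 ht.2 _, intervalIntegral.integral_const_mul, ker_integral hα1]
      rw [Real.norm_eq_abs, abs_of_nonneg (MeasureTheory.integral_nonneg (fun s => norm_nonneg _))]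
      refine hb1.trans ?_
      rw [hb2]
      have h1 : (t - a) ^ (1 - α) ≤ (T - a) ^ (1 - α) :=
        Real.rpow_le_rpow (by linarith [ht.1]) (by linarith [ht.2]) (by linarith)
      have h2 : (0:ℝ) < 1 - α := by linarith
      gcongr
lemma P_swap {α a T : ℝ} (hα0 : 0 < α) (hα1 : α < 1) (haT : a < T)
    {f : ℝ → ℝ} (hf : Continuous f) :
    (∫ t in a..T, ∫ s in a..t, f s * (t - s) ^ (-α))
      = ∫ s in a..T, f s * ((T - s) ^ (1 - α) / (1 - α)) := by
  have hprod := P_prod_integrable hα0 hα1 haT hf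
  have h1 : (∫ t in a..T, ∫ s in a..t, f s * (t - s) ^ (-α))
      = ∫ t in Set.Ioc a T, ∫ s in Set.Ioc a T, (if s < t then f s * (t - s) ^ (-α) else 0) := by
    rw [intervalIntegral.integral_of_le haT.le]
    apply MeasureTheory.setIntegral_congr_fun measurableSet_Ioc
    intro t ht
    exact (tri_repr ht.1 ht.2 _).symm
  have h2 := MeasureTheory.integral_integral_swap hprod
  have h3 : (∫ s in Set.Ioc a T, ∫ t in Set.Ioc a T, (if s < t then f s * (t - s) ^ (-α) else 0))
      = ∫ s in Set.Ioc a T, f s * ((T - s) ^ (1 - α) / (1 - α)) := by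
    apply MeasureTheory.setIntegral_congr_fun measurableSet_Ioc
    intro s hs
    exact tri_repr' hα1 hs.1 hs.2 (f s)
  rw [h1]
  rw [show (∫ t in Set.Ioc a T, ∫ s in Set.Ioc a T, (if s < t then f s * (t - s) ^ (-α) else 0))
      = ∫ s in Set.Ioc a T, ∫ t in Set.Ioc a T, (if s < t then f s * (t - s) ^ (-α) else 0)
    from h2]
  rw [h3, ← intervalIntegral.integral_of_le haT.le]

lemma P_intble {α a T : ℝ} (hα0 : 0 < α) (hα1 : α < 1) (haT : a < T)
    {f : ℝ → ℝ} (hf : Continuous f) :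
    IntervalIntegrable (fun t => ∫ s in a..t, f s * (t - s) ^ (-α)) volume a T := by
  rw [intervalIntegrable_iff_integrableOn_Ioc_of_le haT.le]
  have h1 := (P_prod_integrable hα0 hα1 haT hf).integral_prod_left
  apply h1.congr
  filter_upwards [MeasureTheory.ae_restrict_mem measurableSet_Ioc] with t ht
  simp only [Function.uncurry_apply_pair]
  exact tri_repr ht.1 ht.2 _

lemma K_intble {α a T : ℝ} (hα0 : 0 < α) (hα1 : α < 1) (haT : a < T)
    {g h : ℝ → ℝ} (hg : ContDiff ℝ 1 g) (hh : ContDiff ℝ 1 h) :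
    IntervalIntegrable
      (fun t => ∫ s in a..t, (g t - g s) * (h t - h s) * (t - s) ^ (-1 - α)) volume a T := by
  rw [intervalIntegrable_iff_integrableOn_Ioc_of_le haT.le]
  have h1 := (K_prod_integrable hα0 hα1 haT hg hh).integral_prod_left
  apply h1.congr
  filter_upwards [MeasureTheory.ae_restrict_mem measurableSet_Ioc] with t ht
  exact tri_repr ht.1 ht.2 _

lemma ibp_T {α a T : ℝ} (hα0 : 0 < α) (hα1 : α < 1) (haT : a < T)
    {g h : ℝ → ℝ} (hg : ContDiff ℝ 1 g) (hh : ContDiff ℝ 1 h) :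
    (∫ s in a..T, (deriv g s * h s + g s * deriv h s) * ((T - s) ^ (1 - α) / (1 - α)))
      = (∫ s in a..T, g s * h s * (T - s) ^ (-α))
        - g a * h a * ((T - a) ^ (1 - α) / (1 - α)) := by
  have hg' : Continuous (deriv g) := hg.continuous_deriv le_rfl
  have hh' : Continuous (deriv h) := hh.continuous_deriv le_rfl
  have hw : Continuous (fun s : ℝ => (T - s) ^ (1 - α)) :=
    (Real.continuous_rpow_const (by linarith)).comp (continuous_const.sub continuous_id)
  have i1 : IntervalIntegrable
      (fun s => (deriv g s * h s + g s * deriv h s) * ((T - s) ^ (1 - α) / (1 - α)))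
      volume a T :=
    (((hg'.mul hh.continuous).add (hg.continuous.mul hh')).mul
      (hw.div_const (1 - α))).continuousOn.intervalIntegrable
  have i2 : IntervalIntegrable (fun s => g s * h s * (T - s) ^ (-α)) volume a T :=
    (ker_int hα1 T a).continuousOn_mul ((hg.continuous.mul hh.continuous).continuousOn)
  have hFTC : (∫ s in a..T, ((deriv g s * h s + g s * deriv h s) * ((T - s) ^ (1 - α) / (1 - α))
        - g s * h s * (T - s) ^ (-α)))
      = g T * h T * ((T - T) ^ (1 - α) / (1 - α)) - g a * h a * ((T - a) ^ (1 - α) / (1 - α)) := by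
    refine intervalIntegral.integral_eq_sub_of_hasDeriv_right_of_le
      (f := fun s => g s * h s * ((T - s) ^ (1 - α) / (1 - α))) haT.le ?_ ?_ ?_
    · exact ((hg.continuous.mul hh.continuous).mul (hw.div_const (1 - α))).continuousOn
    · intro x hx
      have hgd : HasDerivAt g (deriv g x) x := ((hg.differentiable one_ne_zero) x).hasDerivAt
      have hhd : HasDerivAt h (deriv h x) x := ((hh.differentiable one_ne_zero) x).hasDerivAt
      have hu : HasDerivAt (fun s : ℝ => T - s) (0 - 1) x :=
        (hasDerivAt_const x T).sub (hasDerivAt_id x)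
      have hne : T - x ≠ 0 := sub_ne_zero.mpr (ne_of_gt hx.2)
      have hv : HasDerivAt (fun u : ℝ => u ^ (1 - α)) ((1 - α) * (T - x) ^ (1 - α - 1)) (T - x) :=
        Real.hasDerivAt_rpow_const (Or.inl hne)
      have hk : HasDerivAt (fun s : ℝ => (T - s) ^ (1 - α))
          ((1 - α) * (T - x) ^ (1 - α - 1) * (0 - 1)) x := by
        simpa [Function.comp_def] using hv.comp x hu
      have hw' : HasDerivAt (fun s : ℝ => (T - s) ^ (1 - α) / (1 - α))
          ((1 - α) * (T - x) ^ (1 - α - 1) * (0 - 1) / (1 - α)) x := hk.div_const (1 - α)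
      have hprod := (hgd.mul hhd).mul hw'
      have heq : (deriv g x * h x + g x * deriv h x) * ((T - x) ^ (1 - α) / (1 - α))
            - g x * h x * (T - x) ^ (-α)
          = (deriv g x * h x + g x * deriv h x) * ((T - x) ^ (1 - α) / (1 - α))
            + g x * h x * ((1 - α) * (T - x) ^ (1 - α - 1) * (0 - 1) / (1 - α)) := by
        rw [show (1:ℝ) - α - 1 = -α by ring]
        have hne1 : (1:ℝ) - α ≠ 0 := ne_of_gt (by linarith)
        field_simp
        ring
      rw [heq]
      exact hprod.hasDerivWithinAt
    · exact i1.sub i2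
  have hT0 : g T * h T * ((T - T) ^ (1 - α) / (1 - α)) = 0 := by
    rw [sub_self, Real.zero_rpow (by intro hc; linarith), zero_div, mul_zero]
  rw [intervalIntegral.integral_sub i1 i2] at hFTC
  rw [hT0] at hFTC
  linarith
theorem stmt_19 (α a T : ℝ) (hα0 : 0 < α) (hα1 : α < 1) (haT : a < T)
    (g h : ℝ → ℝ) (hg : ContDiff ℝ 1 g) (hh : ContDiff ℝ 1 h)
    (D : (ℝ → ℝ) → ℝ → ℝ)
    (hD : ∀ u : ℝ → ℝ, ∀ t : ℝ,
      D u t = (1 / Real.Gamma (1 - α)) * ∫ s in a..t, deriv u s * (t - s) ^ (-α)) :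
    Real.Gamma (1 - α) * ∫ t in a..T, (g t * D h t + h t * D g t)
      = (∫ t in a..T, g t * h t * ((T - t) ^ (-α) + (t - a) ^ (-α)))
        + α * (∫ t in a..T, ∫ s in a..t,
            (g t - g s) * (h t - h s) * (t - s) ^ (-1 - α))
        - ∫ t in a..T, (g t * h a + h t * g a) * (t - a) ^ (-α) := by
  have hΓpos : 0 < Real.Gamma (1 - α) := Real.Gamma_pos_of_pos (by linarith)
  have hΓ : Real.Gamma (1 - α) ≠ 0 := ne_of_gt hΓpos
  have hg' : Continuous (deriv g) := hg.continuous_deriv le_rfl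
  have hh' : Continuous (deriv h) := hh.continuous_deriv le_rfl
  have hkey : ∀ t ∈ Set.Icc a T, Real.Gamma (1 - α) * (g t * D h t + h t * D g t)
      = (∫ s in a..t, (deriv g s * h s + g s * deriv h s) * (t - s) ^ (-α))
        + α * (∫ s in a..t, (g t - g s) * (h t - h s) * (t - s) ^ (-1 - α))
        + (g t - g a) * (h t - h a) * (t - a) ^ (-α) := by
    intro t ht
    rcases eq_or_lt_of_le ht.1 with heq | hlt
    · rw [← heq, hD g, hD h]
      simp
    · rw [hD g, hD h]
      have hIh : IntervalIntegrable (fun s => deriv h s * (t - s) ^ (-α)) volume a t :=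
        (ker_int hα1 t a).continuousOn_mul hh'.continuousOn
      have hIg : IntervalIntegrable (fun s => deriv g s * (t - s) ^ (-α)) volume a t :=
        (ker_int hα1 t a).continuousOn_mul hg'.continuousOn
      have hstep : Real.Gamma (1 - α) *
            (g t * ((1 / Real.Gamma (1 - α)) * ∫ s in a..t, deriv h s * (t - s) ^ (-α))
              + h t * ((1 / Real.Gamma (1 - α)) * ∫ s in a..t, deriv g s * (t - s) ^ (-α)))
          = g t * (∫ s in a..t, deriv h s * (t - s) ^ (-α))
            + h t * (∫ s in a..t, deriv g s * (t - s) ^ (-α)) := by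
        field_simp
      rw [hstep, ← intervalIntegral.integral_const_mul, ← intervalIntegral.integral_const_mul,
        ← intervalIntegral.integral_add (hIh.const_mul (g t)) (hIg.const_mul (h t))]
      exact key_t hα0 hα1 hg hh hlt
  have hPi : IntervalIntegrable
      (fun t => ∫ s in a..t, (deriv g s * h s + g s * deriv h s) * (t - s) ^ (-α)) volume a T :=
    P_intble hα0 hα1 haT ((hg'.mul hh.continuous).add (hg.continuous.mul hh'))
  have hKi : IntervalIntegrable
      (fun t => ∫ s in a..t, (g t - g s) * (h t - h s) * (t - s) ^ (-1 - α)) volume a T :=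
    K_intble hα0 hα1 haT hg hh
  have hBa : IntervalIntegrable (fun t => (g t - g a) * (h t - h a) * (t - a) ^ (-α)) volume a T :=
    (ker_int' hα1 a T).continuousOn_mul
      (((hg.continuous.sub continuous_const).mul (hh.continuous.sub continuous_const)).continuousOn)
  rw [← intervalIntegral.integral_const_mul]
  have h2 : (∫ t in a..T, Real.Gamma (1 - α) * (g t * D h t + h t * D g t))
      = ∫ t in a..T, ((∫ s in a..t, (deriv g s * h s + g s * deriv h s) * (t - s) ^ (-α))
          + α * (∫ s in a..t, (g t - g s) * (h t - h s) * (t - s) ^ (-1 - α))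
          + (g t - g a) * (h t - h a) * (t - a) ^ (-α)) :=
    intervalIntegral.integral_congr (fun t ht => hkey t (by rwa [Set.uIcc_of_le haT.le] at ht))
  rw [h2, intervalIntegral.integral_add (hPi.add (hKi.const_mul α)) hBa,
    intervalIntegral.integral_add hPi (hKi.const_mul α), intervalIntegral.integral_const_mul]
  have hPval : (∫ t in a..T, ∫ s in a..t, (deriv g s * h s + g s * deriv h s) * (t - s) ^ (-α))
      = (∫ s in a..T, g s * h s * (T - s) ^ (-α))
        - g a * h a * ((T - a) ^ (1 - α) / (1 - α)) := by
    rw [P_swap (f := fun s => deriv g s * h s + g s * deriv h s) hα0 hα1 haT ((hg'.mul hh.continuous).add (hg.continuous.mul hh'))]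
    exact ibp_T hα0 hα1 haT hg hh
  have i1 : IntervalIntegrable (fun t => g t * h t * (t - a) ^ (-α)) volume a T :=
    (ker_int' hα1 a T).continuousOn_mul ((hg.continuous.mul hh.continuous).continuousOn)
  have i2 : IntervalIntegrable (fun t => (g t * h a + h t * g a) * (t - a) ^ (-α)) volume a T :=
    (ker_int' hα1 a T).continuousOn_mul
      (((hg.continuous.mul continuous_const).add (hh.continuous.mul continuous_const)).continuousOn)
  have i3 : IntervalIntegrable (fun t => g a * h a * (t - a) ^ (-α)) volume a T :=
    (ker_int' hα1 a T).const_mul (g a * h a)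
  have hBaval : (∫ t in a..T, (g t - g a) * (h t - h a) * (t - a) ^ (-α))
      = (∫ t in a..T, g t * h t * (t - a) ^ (-α))
        - (∫ t in a..T, (g t * h a + h t * g a) * (t - a) ^ (-α))
        + g a * h a * ((T - a) ^ (1 - α) / (1 - α)) := by
    have e : ∀ t, (g t - g a) * (h t - h a) * (t - a) ^ (-α)
        = (g t * h t * (t - a) ^ (-α) - (g t * h a + h t * g a) * (t - a) ^ (-α))
          + g a * h a * (t - a) ^ (-α) := fun t => by ring
    rw [intervalIntegral.integral_congr (fun t _ => e t),
      intervalIntegral.integral_add (i1.sub i2) i3, intervalIntegral.integral_sub i1 i2,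
      intervalIntegral.integral_const_mul, ker_integral' hα1]
  have j1 : IntervalIntegrable (fun t => g t * h t * (T - t) ^ (-α)) volume a T :=
    (ker_int hα1 T a).continuousOn_mul ((hg.continuous.mul hh.continuous).continuousOn)
  have hRHS1 : (∫ t in a..T, g t * h t * ((T - t) ^ (-α) + (t - a) ^ (-α)))
      = (∫ t in a..T, g t * h t * (T - t) ^ (-α))
        + (∫ t in a..T, g t * h t * (t - a) ^ (-α)) := by
    have e : ∀ t, g t * h t * ((T - t) ^ (-α) + (t - a) ^ (-α))
        = g t * h t * (T - t) ^ (-α) + g t * h t * (t - a) ^ (-α) := fun t => by ring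
    rw [intervalIntegral.integral_congr (fun t _ => e t),
      intervalIntegral.integral_add j1 i1]
  rw [hPval, hBaval, hRHS1]
  ring
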